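/- The assimilated-summary posterior variance is non-increasing in the number of assimilated slices: with Σ_a^0 = Σ_SS positive definite and Σ_a^N = Σ_a^{N-1} + Σ_SD_N Σ_{D_N D_N|S}^{-1} Σ_D_NS where Σ_{D_N D_N|S} is positive definite, the quantity σ̃_xx^N = σ_xx − Σ_xS (Σ_SS^{-1} − (Σ_a^N)^{-1}) Σ_Sx satisfies σ̃_xx^{N} ≤ σ̃_xx^{N-1} for all N ≥ 1. -/

import Mathlib

open Matrix

/-- Key lemma: if `A` and `B` are positive definite real matrices with `B - A`
positive semidefinite, then the quadratic form of `B⁻¹` is at most that of `A⁻¹`. -/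
lemma symm_quadform {S : Type*} [Fintype S]
    (A : Matrix S S ℝ) (hA : Aᵀ = A) (u v : S → ℝ) :
    u ⬝ᵥ A *ᵥ v = v ⬝ᵥ A *ᵥ u := by
  calc u ⬝ᵥ A *ᵥ v = (u ᵥ* A) ⬝ᵥ v := Matrix.dotProduct_mulVec u A v
    _ = (Aᵀ *ᵥ u) ⬝ᵥ v := by rw [Matrix.mulVec_transpose]
    _ = (A *ᵥ u) ⬝ᵥ v := by rw [hA]
    _ = v ⬝ᵥ A *ᵥ u := dotProduct_comm _ _

/-- Key lemma: if `A` and `B` are positive definite real matrices with `B - A`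
positive semidefinite, then the quadratic form of `B⁻¹` is at most that of `A⁻¹`. -/
lemma inv_quadform_le {S : Type*} [Fintype S] [DecidableEq S]
    (A B : Matrix S S ℝ) (hA : A.PosDef) (hB : B.PosDef)
    (hBA : (B - A).PosSemidef) (x : S → ℝ) :
    x ⬝ᵥ B⁻¹ *ᵥ x ≤ x ⬝ᵥ A⁻¹ *ᵥ x := by
  have hAu : IsUnit A.det := isUnit_iff_ne_zero.mpr hA.det_pos.ne'
  have hBu : IsUnit B.det := isUnit_iff_ne_zero.mpr hB.det_pos.ne'
  set y : S → ℝ := B⁻¹ *ᵥ x with hy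
  set z : S → ℝ := A⁻¹ *ᵥ x with hz
  have hAy : A *ᵥ z = x := by
    rw [hz, Matrix.mulVec_mulVec, Matrix.mul_nonsing_inv _ hAu, Matrix.one_mulVec]
  have hBy : B *ᵥ y = x := by
    rw [hy, Matrix.mulVec_mulVec, Matrix.mul_nonsing_inv _ hBu, Matrix.one_mulVec]
  have hAsymm : Aᵀ = A := hA.isHermitian.eq
  have hBsymm : Bᵀ = B := hB.isHermitian.eq
  have h1 : x ⬝ᵥ y = y ⬝ᵥ B *ᵥ y := by
    conv_lhs => rw [← hBy]
    rw [symm_quadform B hBsymm, dotProduct_comm]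
  have h2 : x ⬝ᵥ z = z ⬝ᵥ A *ᵥ z := by
    conv_lhs => rw [← hAy]
    rw [symm_quadform A hAsymm, dotProduct_comm]
  have h3 : x ⬝ᵥ y = z ⬝ᵥ A *ᵥ y := by
    conv_lhs => rw [← hAy]
    rw [symm_quadform A hAsymm, dotProduct_comm]
  have h4 : z ⬝ᵥ A *ᵥ y = y ⬝ᵥ A *ᵥ z := symm_quadform A hAsymm z y
  have hd : 0 ≤ y ⬝ᵥ (B - A) *ᵥ y := by simpa using hBA.dotProduct_mulVec_nonneg y
  have hBAy : y ⬝ᵥ A *ᵥ y ≤ y ⬝ᵥ B *ᵥ y := by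
    have e : y ⬝ᵥ (B - A) *ᵥ y = y ⬝ᵥ B *ᵥ y - y ⬝ᵥ A *ᵥ y := by
      rw [Matrix.sub_mulVec, dotProduct_sub]
    linarith [e ▸ hd]
  have hq : 0 ≤ (z - y) ⬝ᵥ A *ᵥ (z - y) := by simpa using hA.posSemidef.dotProduct_mulVec_nonneg (z - y)
  have hexp : (z - y) ⬝ᵥ A *ᵥ (z - y)
      = z ⬝ᵥ A *ᵥ z - z ⬝ᵥ A *ᵥ y - y ⬝ᵥ A *ᵥ z + y ⬝ᵥ A *ᵥ y := by
    simp only [Matrix.mulVec_sub, dotProduct_sub, sub_dotProduct]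
    ring
  have key : x ⬝ᵥ y ≤ x ⬝ᵥ z := by
    have e : z ⬝ᵥ A *ᵥ z - z ⬝ᵥ A *ᵥ y - y ⬝ᵥ A *ᵥ z + y ⬝ᵥ A *ᵥ y
        = x ⬝ᵥ z - 2 * (x ⬝ᵥ y) + y ⬝ᵥ A *ᵥ y := by
      rw [← h2, ← h3, ← h4, ← h3]; ring
    nlinarith [hexp ▸ hq, hBAy, h1]
  simpa [hy, hz] using key

theorem assimilated_variance_nonincreasing
    {S : Type*} [Fintype S] [DecidableEq S]
    {D : ℕ → Type*} [∀ n, Fintype (D n)] [∀ n, DecidableEq (D n)]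
    (SigSS : Matrix S S ℝ) (hSS : SigSS.PosDef)
    (SigSD : ∀ n, Matrix S (D n) ℝ)
    (SigDDcondS : ∀ n, Matrix (D n) (D n) ℝ) (hcond : ∀ n, (SigDDcondS n).PosDef)
    (Siga : ℕ → Matrix S S ℝ) (h0 : Siga 0 = SigSS)
    (hrec : ∀ n : ℕ, Siga (n + 1)
      = Siga n + SigSD (n + 1) * (SigDDcondS (n + 1))⁻¹ * (SigSD (n + 1))ᵀ)
    (SigxS : Matrix (Fin 1) S ℝ) (sigxx : ℝ) :
    ∀ N : ℕ, 1 ≤ N →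
      sigxx - (SigxS * (SigSS⁻¹ - (Siga N)⁻¹) * SigxSᵀ) 0 0
        ≤ sigxx - (SigxS * (SigSS⁻¹ - (Siga (N - 1))⁻¹) * SigxSᵀ) 0 0 := by
  -- the added increments are PSD
  have hpsd : ∀ n : ℕ,
      (SigSD (n + 1) * (SigDDcondS (n + 1))⁻¹ * (SigSD (n + 1))ᵀ).PosSemidef := by
    intro n
    have h := ((hcond (n + 1)).inv.posSemidef).mul_mul_conjTranspose_same (SigSD (n + 1))
    simpa [Matrix.conjTranspose_eq_transpose_of_trivial] using h
  -- each Siga n is positive definite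
  have hpos : ∀ n : ℕ, (Siga n).PosDef := by
    intro n
    induction n with
    | zero => rw [h0]; exact hSS
    | succ k ih =>
      rw [hrec k]
      exact ih.add_posSemidef (hpsd k)
  rintro N hN
  obtain ⟨m, rfl⟩ : ∃ m, N = m + 1 := ⟨N - 1, (Nat.succ_pred_eq_of_pos hN).symm⟩
  simp only [Nat.add_sub_cancel]
  have hBA : (Siga (m + 1) - Siga m).PosSemidef := by
    rw [hrec m]; simpa using hpsd m
  -- reduce to quadratic forms
  set x : S → ℝ := fun s => SigxS 0 s with hx
  have hform : ∀ M : Matrix S S ℝ, (SigxS * M * SigxSᵀ) 0 0 = x ⬝ᵥ M *ᵥ x := by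
    intro M
    simp only [Matrix.mul_apply, Matrix.mulVec, dotProduct, Finset.sum_mul,
      Finset.mul_sum, hx, Matrix.transpose_apply]
    rw [Finset.sum_comm]
    exact Finset.sum_congr rfl fun i _ => Finset.sum_congr rfl fun j _ => by ring
  have key := inv_quadform_le (Siga m) (Siga (m + 1)) (hpos m) (hpos (m + 1)) hBA x
  have e1 : (SigxS * (SigSS⁻¹ - (Siga (m + 1))⁻¹) * SigxSᵀ) 0 0
      = x ⬝ᵥ SigSS⁻¹ *ᵥ x - x ⬝ᵥ (Siga (m + 1))⁻¹ *ᵥ x := by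
    rw [hform]
    rw [Matrix.sub_mulVec, dotProduct_sub]
  have e2 : (SigxS * (SigSS⁻¹ - (Siga m)⁻¹) * SigxSᵀ) 0 0
      = x ⬝ᵥ SigSS⁻¹ *ᵥ x - x ⬝ᵥ (Siga m)⁻¹ *ᵥ x := by
    rw [hform]
    rw [Matrix.sub_mulVec, dotProduct_sub]
  rw [e1, e2]
  linarith
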